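/- In (L, B, k) as below, let E₁ = 0 and E_{j+1} = E_j + A_j for j = 1, …, 6, where (A₁, …, A₇) has coordinate vectors A₁ = (0,−1,0,0,1), A₂ = (1,1,0,0,−1), A₃ = (−1,0,1,1,0), A₄ = (1,1,0,−1,0), A₅ = (0,0,1,1,−1), A₆ = (0,0,−1,0,1), A₇ = (0,1,1,0,−1) in the basis (D₂, D₃, D₄, D₅, D₇); explicitly E = (E₁,…,E₇) has coordinate vectors (0,0,0,0,0), (0,−1,0,0,1), (1,0,0,0,0), (0,0,1,1,0), (1,1,1,0,0), (1,1,2,1,−1), (1,1,1,1,0). Let C = D₆ = D₂ + D₃ − D₅ − D₇, so B(C,C) = −2 and B(C,k) = 0. Then B(C, E_j) ∈ {0, 1} for every j = 1, …, 7, and the reflection s_C : x ↦ x + B(C,x)·C maps (E₁, …, E₇) to the sequence with coordinate vectors (0,0,0,0,0), (1,0,0,−1,0), (1,0,0,0,0), (1,1,1,0,−1), (1,1,1,0,0), (1,1,2,1,−1), (2,2,1,0,−1). (This is the action on Picard classes of the spherical twist along the (−2)-curve, mapping the non-constructible exceptional sequence E to a constructible one.) -/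

import Mathlib

/- The Picard lattice of the toric surface `X = TV(-2,-1,-1,-1,-1,-2,-1)`:
`L = ℤ⁵` with basis `(D₂, D₃, D₄, D₅, D₇)` and the intersection pairing given
by the Gram matrix below; `D₁ = -D₂ + D₄ + D₅ - D₇`, `D₆ = D₂ + D₃ - D₅ - D₇`,
and the canonical class is `k = -(D₁ + ⋯ + D₇)`. -/

/-- Gram matrix of the intersection pairing in the basis `(D₂, D₃, D₄, D₅, D₇)`. -/
def gram : Matrix (Fin 5) (Fin 5) ℤ :=
  !![-1, 1, 0, 0, 0;
      1, -1, 1, 0, 0;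
      0, 1, -1, 1, 0;
      0, 0, 1, -1, 0;
      0, 0, 0, 0, -1]

/-- The intersection pairing on `L = ℤ⁵`. -/
def picForm (x y : Fin 5 → ℤ) : ℤ := dotProduct x (gram.mulVec y)

def vD2 : Fin 5 → ℤ := ![1, 0, 0, 0, 0]
def vD3 : Fin 5 → ℤ := ![0, 1, 0, 0, 0]
def vD4 : Fin 5 → ℤ := ![0, 0, 1, 0, 0]
def vD5 : Fin 5 → ℤ := ![0, 0, 0, 1, 0]
def vD7 : Fin 5 → ℤ := ![0, 0, 0, 0, 1]
def vD1 : Fin 5 → ℤ := -vD2 + vD4 + vD5 - vD7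
def vD6 : Fin 5 → ℤ := vD2 + vD3 - vD5 - vD7

/-- The canonical class `k = -(D₁ + D₂ + D₃ + D₄ + D₅ + D₆ + D₇)`. -/
def vK : Fin 5 → ℤ := -(vD1 + vD2 + vD3 + vD4 + vD5 + vD6 + vD7)

/-- The non-constructible exceptional toric system `A = (A₁, …, A₇)`, given by
its coordinate vectors in the basis `(D₂, D₃, D₄, D₅, D₇)`. -/
def exSys : Fin 7 → Fin 5 → ℤ :=
  ![![0, -1, 0, 0, 1], ![1, 1, 0, 0, -1], ![-1, 0, 1, 1, 0], ![1, 1, 0, -1, 0],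
    ![0, 0, 1, 1, -1], ![0, 0, -1, 0, 1], ![0, 1, 1, 0, -1]]

/-- The explicit coordinate vectors of the exceptional sequence
`E = (E₁, …, E₇)`. -/
def exSeq : Fin 7 → Fin 5 → ℤ :=
  ![![0, 0, 0, 0, 0], ![0, -1, 0, 0, 1], ![1, 0, 0, 0, 0], ![0, 0, 1, 1, 0],
    ![1, 1, 1, 0, 0], ![1, 1, 2, 1, -1], ![1, 1, 1, 1, 0]]

/-- The explicit coordinate vectors of the image of `E` under the reflection
`s_C` (the action of the spherical twist along the `(-2)`-curve `C = D₆`). -/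
def twistedSeq : Fin 7 → Fin 5 → ℤ :=
  ![![0, 0, 0, 0, 0], ![1, 0, 0, -1, 0], ![1, 0, 0, 0, 0], ![1, 1, 1, 0, -1],
    ![1, 1, 1, 0, 0], ![1, 1, 2, 1, -1], ![2, 2, 1, 0, -1]]

/-- Let `E₁ = 0` and `E_{j+1} = E_j + A_j`. Then `E` has the explicit coordinate
vectors `exSeq`; the class `C = D₆` satisfies `B(C,C) = -2` and `B(C,k) = 0`;
`B(C, E_j) ∈ {0, 1}` for all `j`; and the reflection `s_C : x ↦ x + B(C,x)·C`
maps `(E₁, …, E₇)` to the explicit sequence `twistedSeq`. (This is the action on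
Picard classes of the spherical twist along the `(-2)`-curve `D₆`, mapping the
non-constructible exceptional sequence `E` to a constructible one.) -/
theorem sphericalTwist_on_exceptional_sequence
    (E : Fin 7 → Fin 5 → ℤ) (hE0 : E 0 = 0)
    (hEstep : ∀ j : Fin 6, E j.succ = E j.castSucc + exSys j.castSucc) :
    (∀ j, E j = exSeq j) ∧
    picForm vD6 vD6 = -2 ∧ picForm vD6 vK = 0 ∧
    (∀ j, picForm vD6 (E j) = 0 ∨ picForm vD6 (E j) = 1) ∧
    (∀ j, E j + picForm vD6 (E j) • vD6 = twistedSeq j) := by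
  have h1 : E 1 = exSeq 1 := by
    have := hEstep 0; simp only [show (0:Fin 6).succ = 1 from rfl,
      show (0:Fin 6).castSucc = 0 from rfl] at this
    rw [this, hE0]; decide
  have h2 : E 2 = exSeq 2 := by
    have := hEstep 1; rw [show (1:Fin 6).succ = 2 from rfl,
      show (1:Fin 6).castSucc = 1 from rfl] at this
    rw [this, h1]; decide
  have h3 : E 3 = exSeq 3 := by
    have := hEstep 2; rw [show (2:Fin 6).succ = 3 from rfl,
      show (2:Fin 6).castSucc = 2 from rfl] at this
    rw [this, h2]; decide
  have h4 : E 4 = exSeq 4 := by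
    have := hEstep 3; rw [show (3:Fin 6).succ = 4 from rfl,
      show (3:Fin 6).castSucc = 3 from rfl] at this
    rw [this, h3]; decide
  have h5 : E 5 = exSeq 5 := by
    have := hEstep 4; rw [show (4:Fin 6).succ = 5 from rfl,
      show (4:Fin 6).castSucc = 4 from rfl] at this
    rw [this, h4]; decide
  have h6 : E 6 = exSeq 6 := by
    have := hEstep 5; rw [show (5:Fin 6).succ = 6 from rfl,
      show (5:Fin 6).castSucc = 5 from rfl] at this
    rw [this, h5]; decide
  have hall : ∀ j, E j = exSeq j := by
    intro j; fin_cases j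
    · show E 0 = exSeq 0; rw [hE0]; decide
    · exact h1
    · exact h2
    · exact h3
    · exact h4
    · exact h5
    · exact h6
  refine ⟨hall, by decide, by decide, ?_, ?_⟩
  · intro j; rw [hall j]; fin_cases j <;> decide
  · intro j; rw [hall j]; fin_cases j <;> decide
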